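/- The vector w with w_n = τ(b_n + θ_k)/a_n for n ∈ H_k ∖ H_{k−1} is the unique vector in the set {w′ : w′_n ≥ w_n for all n} satisfying the feasibility constraints Σ_{n∈S} w′_n ≤ τ − I_S for all subsets S. That is, any w′ ≠ w with w′ ≥ w componentwise violates Σ_{n∈H_k} w′_n ≤ τ − I_{H_k} for some k. -/
import Mathlib


open Finset

/-- Uniqueness step of the convergence proof: the workload vector `w`, with
`w n = τ (b n + θ k) / a n` for `n ∈ H k \ H (k-1)`, is the unique feasible vector in
the upper set `{w' : w' ≥ w}`.  Concretely, any `w' ≠ w` with `w' ≥ w` componentwise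
violates one of the constraints `∑_{n ∈ H k} w'_n ≤ τ - I (H k)`. -/
theorem stmt_11 (N : ℕ) (τ : ℝ) (hτ : 0 < τ)
    (a b : Fin N → ℝ) (ha : ∀ n, 0 < a n) (hb : ∀ n, 0 ≤ b n)
    (I : Finset (Fin N) → ℝ)
    (hI : ∀ S, 0 ≤ I S ∧ I S ≤ τ)
    (K : ℕ) (H : ℕ → Finset (Fin N)) (θ : ℕ → ℝ)
    (hH0 : H 0 = ∅) (hHK : H K = Finset.univ)
    (hchain : ∀ k, 1 ≤ k → k ≤ K → H (k-1) ⊂ H k)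
    (w : Fin N → ℝ)
    (hw : ∀ k, 1 ≤ k → k ≤ K → ∀ n ∈ H k \ H (k-1), w n = τ * (b n + θ k) / a n)
    -- the key property of the decomposition (cf. the previous statement)
    (hlayer : ∀ k, 1 ≤ k → k ≤ K → ∑ n ∈ H k, w n = τ - I (H k))
    (w' : Fin N → ℝ) (hge : ∀ n, w n ≤ w' n) (hne : w' ≠ w) :
    ∃ k, 1 ≤ k ∧ k ≤ K ∧ τ - I (H k) < ∑ n ∈ H k, w' n := by
  -- K ≥ 1, since otherwise H K = H 0 = ∅ = univ forces N = 0 and w' = w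
  have hK : 1 ≤ K := by
    by_contra h
    have hK0 : K = 0 := by omega
    have : (Finset.univ : Finset (Fin N)) = ∅ := by rw [← hHK, hK0, hH0]
    have hNempty : IsEmpty (Fin N) := by
      rwa [Finset.univ_eq_empty_iff] at this
    exact hne (funext fun n => (hNempty.false n).elim)
  -- some coordinate is strictly bigger
  obtain ⟨m, hm⟩ : ∃ m, w m < w' m := by
    by_contra h
    push_neg at h
    exact hne (funext fun n => le_antisymm (h n) (hge n))
  refine ⟨K, hK, le_refl K, ?_⟩
  rw [← hlayer K hK (le_refl K), hHK]
  exact Finset.sum_lt_sum (fun n _ => hge n) ⟨m, Finset.mem_univ m, hm⟩
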